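/- Let g be a finite-dimensional complex simple Lie algebra not of type A₁, with the grading data of the context. With the Killing form normalized so that the Casimir eigenvalue of the adjoint representation is 1, the Casimir eigenvalue of the component of S²g with highest weight 2α₀ is (2α₀+2ρ, 2α₀) = 2(v+3)/(v+2), and the Casimir eigenvalue of the component with highest weight α₀+ᾶ is (α₀+ᾶ+2ρ, α₀+ᾶ) = (v+h+2)/(v+2). Consequently, normalizing Vogel's parameters so that α = −2, one has β = h′+2, γ = h+2, and t = v+2 equals the dual Coxeter number of g. -/

import Mathlib

/-!
Statement 6 (Landsberg–Manivel, §3.2 and Corollary 3.2): the Casimir eigenvalues of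
the components of `S²g` with highest weights `2α₀` and `α₀ + ᾶ`, computed with respect
to the Killing form normalized so that the adjoint representation has Casimir
eigenvalue 1; and the resulting identification of Vogel's parameters
`β = h' + 2`, `γ = h + 2`, `t = v + 2 = ȟ`.
-/

open Finset
open scoped Classical

set_option linter.unusedSectionVars false
set_option linter.unusedVariables false
set_option maxHeartbeats 1000000

noncomputable section
namespace Stmt6Aux

variable {V : Type*} [AddCommGroup V] [Module ℂ V]

section Bfacts
variable {B : V → V → ℚ} (hadd : ∀ x y z, B (x + y) z = B x z + B y z)
include hadd

lemma Bzero (z : V) : B 0 z = 0 := by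
  have := hadd 0 0 z; simp only [add_zero] at this; linarith

lemma Bneg (x z : V) : B (-x) z = - B x z := by
  have := hadd x (-x) z; rw [add_neg_cancel, Bzero hadd] at this; linarith

lemma Bsub (x y z : V) : B (x - y) z = B x z - B y z := by
  rw [sub_eq_add_neg, hadd, Bneg hadd, sub_eq_add_neg]

lemma Bnsmul (n : ℕ) (x z : V) : B (n • x) z = n * B x z := by
  induction n with
  | zero => simpa using Bzero hadd z
  | succ k ih => rw [succ_nsmul, hadd, ih]; push_cast; ring

lemma Bzsmul (n : ℤ) (x z : V) : B (n • x) z = n * B x z := by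
  cases n with
  | ofNat k => simpa using Bnsmul hadd k x z
  | negSucc k =>
      rw [Int.negSucc_eq, ← Nat.cast_succ, neg_smul, Bneg hadd, natCast_zsmul, Bnsmul hadd]
      push_cast; ring

lemma Bmsum (m : Multiset V) (z : V) :
    B m.sum z = (m.map (fun p => B p z)).sum := by
  induction m using Multiset.induction_on with
  | empty => simpa using Bzero hadd z
  | cons a s ih => simp [hadd, ih]

lemma Bfsum {ι : Type*} (s : Finset ι) (f : ι → V) (z : V) :
    B (∑ i ∈ s, f i) z = ∑ i ∈ s, B (f i) z := by
  classical
  induction s using Finset.induction_on with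
  | empty => simpa using Bzero hadd z
  | insert _ _ hx ih => rw [Finset.sum_insert hx, hadd, ih, Finset.sum_insert hx]

end Bfacts

section Core
variable (Φ Φpos : Finset V) (B : V → V → ℚ)

lemma multiset_zero
    (hadd : ∀ x y z, B (x + y) z = B x z + B y z)
    (hsym : ∀ x y, B x y = B y x)
    (h0 : (0 : V) ∉ Φpos) (hps : Φpos ⊆ Φ)
    (hpm : ∀ a ∈ Φ, (a ∈ Φpos ↔ -a ∉ Φpos))
    (hpa : ∀ a ∈ Φpos, ∀ b ∈ Φpos, a + b ∈ Φ → a + b ∈ Φpos)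
    (hR2 : ∀ a ∈ Φ, ∀ b ∈ Φ, B a b < 0 → a ≠ -b → a + b ∈ Φ)
    (hR4 : ∀ a ∈ Φ, 0 < B a a) :
    ∀ (n : ℕ) (m : Multiset V), Multiset.card m ≤ n →
      (∀ p ∈ m, p ∈ Φpos) → m.sum = 0 → m = 0 := by
  intro n
  induction n with
  | zero =>
      intro m hc _ _
      exact Multiset.card_eq_zero.mp (Nat.le_zero.mp hc)
  | succ n ih =>
      intro m hc hmem hsum
      by_contra hne
      obtain ⟨p₁, hp₁⟩ := Multiset.exists_mem_of_ne_zero hne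
      have hp₁pos : p₁ ∈ Φpos := hmem p₁ hp₁
      have hsum' : ((m.erase p₁).map (fun p => B p p₁)).sum = - B p₁ p₁ := by
        have h1 : B m.sum p₁ = (m.map (fun p => B p p₁)).sum := Bmsum hadd m p₁
        rw [hsum, Bzero hadd] at h1
        have h2 : m = p₁ ::ₘ m.erase p₁ := (Multiset.cons_erase hp₁).symm
        rw [h2, Multiset.map_cons, Multiset.sum_cons] at h1
        linarith
      have hex : ∃ p ∈ m.erase p₁, B p p₁ < 0 := by
        by_contra hall
        push_neg at hall
        have : (0:ℚ) ≤ ((m.erase p₁).map (fun p => B p p₁)).sum := by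
          apply Multiset.sum_nonneg
          intro x hx
          obtain ⟨p, hp, rfl⟩ := Multiset.mem_map.mp hx
          exact hall p hp
        have := hR4 p₁ (hps hp₁pos)
        linarith
      obtain ⟨p, hpmem, hBneg⟩ := hex
      have hppos : p ∈ Φpos := hmem p (Multiset.mem_of_mem_erase hpmem)
      have hpne : p ≠ -p₁ := by
        intro h
        have := (hpm p₁ (hps hp₁pos)).mp hp₁pos
        rw [← h] at this; exact this hppos
      have hsumΦ : p + p₁ ∈ Φ := hR2 p (hps hppos) p₁ (hps hp₁pos) hBneg hpne
      have hsumpos : p + p₁ ∈ Φpos := hpa p hppos p₁ hp₁pos hsumΦ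
      set m' : Multiset V := (p + p₁) ::ₘ ((m.erase p₁).erase p) with hm'
      have hcard : Multiset.card m ≥ 2 := by
        have h1 : Multiset.card (m.erase p₁) ≥ 1 := by
          refine Multiset.card_pos.mpr fun h => ?_
          rw [h] at hpmem; simp at hpmem
        have h2 : Multiset.card (m.erase p₁) = Multiset.card m - 1 :=
          Multiset.card_erase_of_mem hp₁
        omega
      have hcard' : Multiset.card m' ≤ n := by
        have h1 : Multiset.card (m.erase p₁) = Multiset.card m - 1 :=
          Multiset.card_erase_of_mem hp₁
        have h2 : Multiset.card ((m.erase p₁).erase p) = Multiset.card (m.erase p₁) - 1 :=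
          Multiset.card_erase_of_mem hpmem
        have h3 : Multiset.card m' = Multiset.card ((m.erase p₁).erase p) + 1 := by
          rw [hm', Multiset.card_cons]
        omega
      have hmem' : ∀ q ∈ m', q ∈ Φpos := by
        intro q hq
        rw [hm', Multiset.mem_cons] at hq
        rcases hq with rfl | hq
        · exact hsumpos
        · exact hmem q (Multiset.mem_of_mem_erase (Multiset.mem_of_mem_erase hq))
      have hsum'' : m'.sum = 0 := by
        have e1 : (m.erase p₁).sum = m.sum - p₁ := by
          have := Multiset.cons_erase hp₁
          have h := congrArg Multiset.sum this
          rw [Multiset.sum_cons] at h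
          rw [← h]; abel
        have e2 : ((m.erase p₁).erase p).sum = (m.erase p₁).sum - p := by
          have := Multiset.cons_erase hpmem
          have h := congrArg Multiset.sum this
          rw [Multiset.sum_cons] at h
          rw [← h]; abel
        rw [hm', Multiset.sum_cons, e2, e1, hsum]; abel
      have := ih m' hcard' hmem' hsum''
      rw [hm'] at this
      exact Multiset.cons_ne_zero this

lemma mem_closure_multiset {x : V} (hx : x ∈ AddSubmonoid.closure (↑Φpos : Set V)) :
    ∃ m : Multiset V, (∀ p ∈ m, p ∈ Φpos) ∧ m.sum = x := by
  induction hx using AddSubmonoid.closure_induction with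
  | mem y hy => exact ⟨{y}, by simpa using hy, by simp⟩
  | zero => exact ⟨0, by simp, by simp⟩
  | add y z _ _ ihy ihz =>
      obtain ⟨m₁, hm₁, hs₁⟩ := ihy
      obtain ⟨m₂, hm₂, hs₂⟩ := ihz
      refine ⟨m₁ + m₂, ?_, by simp [hs₁, hs₂]⟩
      intro p hp
      rcases Multiset.mem_add.mp hp with h | h
      · exact hm₁ p h
      · exact hm₂ p h


lemma key
    (hsym : ∀ x y, B x y = B y x)
    (hadd : ∀ x y z, B (x + y) z = B x z + B y z)
    (h0 : (0 : V) ∉ Φ) (hps : Φpos ⊆ Φ)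
    (hpm : ∀ a ∈ Φ, (a ∈ Φpos ↔ -a ∉ Φpos))
    (hpa : ∀ a ∈ Φpos, ∀ b ∈ Φpos, a + b ∈ Φ → a + b ∈ Φpos)
    (hR1 : ∀ a ∈ Φ, -a ∈ Φ)
    (hR2 : ∀ a ∈ Φ, ∀ b ∈ Φ, B a b < 0 → a ≠ -b → a + b ∈ Φ)
    (hR3 : ∀ a ∈ Φ, ∀ b ∈ Φ, ∃ n : ℤ, 2 * B a b = n * B b b)
    (hR5 : ∀ a ∈ Φ, ∀ b ∈ Φ, ∀ n : ℤ, 2 * B a b = n * B b b → a - n • b ∈ Φ)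
    (hR4 : ∀ a ∈ Φ, 0 < B a a)
    {α₀ atil : V}
    (hα₀Φ : α₀ ∈ Φ)
    (hhigh : ∀ γ ∈ Φ, α₀ - γ ∈ AddSubmonoid.closure (↑Φpos : Set V))
    (hatΦ : atil ∈ Φ)
    (hlong : ∀ δ ∈ Φ, B δ δ ≤ B atil atil)
    (hortho : B atil α₀ = 0)
    (hdom : ∀ γ ∈ Φ, B γ γ = B atil atil → B γ α₀ = 0 →
      atil - γ ∈ AddSubmonoid.closure (↑Φpos : Set V)) :
    2 * (∑ μ ∈ Φpos, B μ α₀)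
        = B α₀ α₀ * (((Φ.filter fun μ => 2 * B μ α₀ = B α₀ α₀).card : ℚ) + 2)
    ∧ B atil atil = B α₀ α₀
    ∧ (∑ μ ∈ Φpos, B μ atil) = ∑ μ ∈ Φpos.filter (fun μ => B μ α₀ = 0), B μ atil := by
  classical
  have h0p : (0 : V) ∉ Φpos := fun h => h0 (hps h)
  have mz : ∀ m : Multiset V, (∀ p ∈ m, p ∈ Φpos) → m.sum = 0 → m = 0 := fun m =>
    multiset_zero Φ Φpos B hadd hsym h0p hps hpm hpa hR2 hR4 (Multiset.card m) m le_rfl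
  have oppo : ∀ x : V, x ∈ AddSubmonoid.closure (↑Φpos : Set V) →
      -x ∈ AddSubmonoid.closure (↑Φpos : Set V) → x = 0 := by
    intro x h1 h2
    obtain ⟨m₁, hm₁, hs₁⟩ := mem_closure_multiset Φpos h1
    obtain ⟨m₂, hm₂, hs₂⟩ := mem_closure_multiset Φpos h2
    have : (m₁ + m₂).sum = 0 := by rw [Multiset.sum_add, hs₁, hs₂]; abel
    have hz := mz (m₁ + m₂) (by intro p hp; rcases Multiset.mem_add.mp hp with h | h
                                · exact hm₁ p h
                                · exact hm₂ p h) this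
    have : m₁ = 0 := by
      have := congrArg Multiset.card hz
      simp only [Multiset.card_add, Multiset.card_zero] at this
      exact Multiset.card_eq_zero.mp (by omega)
    rw [← hs₁, this, Multiset.sum_zero]
  have a_pos : 0 < B α₀ α₀ := hR4 _ hα₀Φ
  have memcl : ∀ σ ∈ Φpos, σ ∈ AddSubmonoid.closure (↑Φpos : Set V) := fun σ hσ =>
    AddSubmonoid.subset_closure hσ
  have α₀pos : α₀ ∈ Φpos := by
    by_contra h
    have hneg : -α₀ ∈ Φpos := by
      have := hpm α₀ hα₀Φ; tauto
    have h2 : α₀ - (-α₀) ∈ AddSubmonoid.closure (↑Φpos : Set V) := hhigh _ (hps hneg)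
    rw [sub_neg_eq_add] at h2
    have h3 : -(α₀ + α₀) ∈ AddSubmonoid.closure (↑Φpos : Set V) := by
      have : -(α₀ + α₀) = (-α₀) + (-α₀) := by abel
      rw [this]
      exact AddSubmonoid.add_mem _ (memcl _ hneg) (memcl _ hneg)
    have h4 := oppo _ h2 h3
    have h5 : B (α₀ + α₀) α₀ = 0 := by rw [h4]; exact Bzero hadd _
    rw [hadd] at h5; linarith
  have negα₀ : -α₀ ∉ Φpos := (hpm α₀ hα₀Φ).mp α₀pos
  have possig : ∀ σ ∈ Φpos, 0 ≤ B σ α₀ := by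
    intro σ hσ
    by_contra h
    push_neg at h
    have hσΦ := hps hσ
    have hne : σ ≠ -α₀ := fun h' => negα₀ (h' ▸ hσ)
    have h1 : σ + α₀ ∈ Φ := hR2 σ hσΦ α₀ hα₀Φ h hne
    have h3 : α₀ - (σ + α₀) ∈ AddSubmonoid.closure (↑Φpos : Set V) := hhigh _ h1
    have h4 : α₀ - (σ + α₀) = -σ := by abel
    rw [h4] at h3
    have h5 := oppo σ (memcl σ hσ) h3
    exact h0p (h5 ▸ hσ)
  have clpos : ∀ y : V, (∀ σ ∈ Φpos, 0 ≤ B σ y) →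
      ∀ x ∈ AddSubmonoid.closure (↑Φpos : Set V), 0 ≤ B x y := by
    intro y hy x hx
    induction hx using AddSubmonoid.closure_induction with
    | mem z hz => exact hy z hz
    | zero => rw [Bzero hadd]
    | add p q hp hq ihp ihq => rw [hadd]; linarith
  have lC1 : ∀ μ ∈ Φ, B μ α₀ ≤ B α₀ α₀ := by
    intro μ hμ
    have := clpos α₀ possig _ (hhigh μ hμ)
    rw [Bsub hadd] at this; linarith
  have lC2 : ∀ μ ∈ Φ, B μ α₀ = B α₀ α₀ → μ = α₀ := by
    intro μ hμ he
    have h5 : μ - (2 : ℤ) • α₀ ∈ Φ := hR5 μ hμ α₀ hα₀Φ 2 (by rw [he]; push_cast; ring)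
    have h6 : -(μ - (2 : ℤ) • α₀) ∈ Φ := hR1 _ h5
    have h7 : α₀ - (-(μ - (2 : ℤ) • α₀)) ∈ AddSubmonoid.closure (↑Φpos : Set V) := hhigh _ h6
    have h8 : α₀ - (-(μ - (2 : ℤ) • α₀)) = -(α₀ - μ) := by
      rw [two_zsmul]; abel
    rw [h8] at h7
    have h10 := oppo (α₀ - μ) (hhigh μ hμ) h7
    have := sub_eq_zero.mp h10
    exact this.symm
  have lC3 : ∀ μ ∈ Φ, -B α₀ α₀ ≤ B μ α₀ := by
    intro μ hμ
    have := lC1 _ (hR1 μ hμ)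
    rw [Bneg hadd] at this; linarith
  have lC4 : ∀ μ ∈ Φ, B μ α₀ = -B α₀ α₀ → μ = -α₀ := by
    intro μ hμ he
    have : B (-μ) α₀ = B α₀ α₀ := by rw [Bneg hadd, he]; ring
    have := lC2 _ (hR1 μ hμ) this
    rw [← this]; abel
  have lE : ∀ μ ∈ Φ, 0 < B μ α₀ → μ ∈ Φpos := by
    intro μ hμ hpos
    by_contra h
    have hneg : -μ ∈ Φpos := by have := hpm μ hμ; tauto
    have := possig _ hneg
    rw [Bneg hadd] at this; linarith
  have levcases : ∀ μ ∈ Φpos,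
      B μ α₀ = 0 ∨ 2 * B μ α₀ = B α₀ α₀ ∨ B μ α₀ = B α₀ α₀ := by
    intro μ hμ
    obtain ⟨n, hn⟩ := hR3 μ (hps hμ) α₀ hα₀Φ
    have h1 := possig μ hμ
    have h2 := lC1 μ (hps hμ)
    have hn0 : (0 : ℚ) ≤ (n : ℚ) := by nlinarith
    have hn2 : ((n : ℚ)) ≤ 2 := by nlinarith
    have hn0' : (0 : ℤ) ≤ n := by exact_mod_cast hn0
    have hn2' : n ≤ 2 := by exact_mod_cast hn2
    interval_cases n
    · left; rw [Int.cast_zero, zero_mul] at hn; linarith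
    · right; left; rw [Int.cast_one, one_mul] at hn; linarith
    · right; right; rw [Int.cast_two] at hn; linarith
  set T1 := Φ.filter (fun μ => 2 * B μ α₀ = B α₀ α₀) with hT1
  have T1sub : T1 ⊆ Φpos := by
    intro μ hμ
    rw [hT1, Finset.mem_filter] at hμ
    exact lE μ hμ.1 (by linarith [hμ.2])
  have α₀notT1 : α₀ ∉ T1 := by
    rw [hT1, Finset.mem_filter]
    rintro ⟨-, h⟩; linarith
  refine ⟨?_, ?_, ?_⟩
  · -- k1
    have hU : insert α₀ T1 ⊆ Φpos := by
      intro μ hμ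
      rcases Finset.mem_insert.mp hμ with rfl | h
      · exact α₀pos
      · exact T1sub h
    have hvanish : ∀ μ ∈ Φpos, μ ∉ insert α₀ T1 → 2 * B μ α₀ = 0 := by
      intro μ hμ hnot
      rcases levcases μ hμ with h | h | h
      · linarith
      · exact absurd (Finset.mem_insert_of_mem (Finset.mem_filter.mpr ⟨hps hμ, h⟩)) hnot
      · exfalso; apply hnot; rw [lC2 μ (hps hμ) h]; exact Finset.mem_insert_self _ _
    have e1 : ∑ μ ∈ Φpos, (2 * B μ α₀) = ∑ μ ∈ insert α₀ T1, (2 * B μ α₀) :=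
      (Finset.sum_subset hU hvanish).symm
    have e2 : ∑ μ ∈ insert α₀ T1, (2 * B μ α₀)
        = 2 * B α₀ α₀ + ∑ μ ∈ T1, (2 * B μ α₀) := Finset.sum_insert α₀notT1
    have e3 : ∑ μ ∈ T1, (2 * B μ α₀) = ∑ μ ∈ T1, B α₀ α₀ := by
      apply Finset.sum_congr rfl
      intro μ hμ
      exact (Finset.mem_filter.mp hμ).2
    have e4 : ∑ _μ ∈ T1, B α₀ α₀ = (T1.card : ℚ) * B α₀ α₀ := by
      rw [Finset.sum_const, nsmul_eq_mul]
    have e5 : 2 * ∑ μ ∈ Φpos, B μ α₀ = ∑ μ ∈ Φpos, (2 * B μ α₀) := by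
      rw [Finset.mul_sum]
    rw [e5, e1, e2, e3, e4]; ring
  · -- k2 : B atil atil = B α₀ α₀
    have hab : B α₀ α₀ ≤ B atil atil := hlong α₀ hα₀Φ
    by_contra hne
    have hlt : B α₀ α₀ < B atil atil := lt_of_le_of_ne hab (fun h => hne h.symm)
    have b_pos : 0 < B atil atil := lt_trans a_pos hlt
    have step1 : ∀ δ ∈ Φ, B δ δ = B atil atil → B δ α₀ = 0 := by
      intro δ hδ hbb
      obtain ⟨n, hn⟩ := hR3 δ hδ α₀ hα₀Φ
      obtain ⟨m, hm⟩ := hR3 α₀ hα₀Φ δ hδ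
      rw [hbb] at hm
      have hmsym : B α₀ δ = B δ α₀ := hsym α₀ δ
      have h1 := lC1 δ hδ
      have h2 := lC3 δ hδ
      have hn2 : ((-2 : ℤ) : ℚ) ≤ (n : ℚ) ∧ ((n : ℚ)) ≤ ((2 : ℤ) : ℚ) := by
        constructor <;> [push_cast; push_cast] <;> nlinarith
      have hnl : (-2 : ℤ) ≤ n := by exact_mod_cast hn2.1
      have hnr : n ≤ 2 := by exact_mod_cast hn2.2
      interval_cases n
      · exfalso
        have : B δ α₀ = -B α₀ α₀ := by push_cast at hn; linarith
        have hd := lC4 δ hδ this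
        rw [hd] at hbb
        rw [show B (-α₀) (-α₀) = B α₀ α₀ by rw [Bneg hadd, hsym, Bneg hadd]; ring] at hbb
        linarith
      · exfalso
        -- 2 B δ α₀ = -a and 2 B α₀ δ = m b
        push_cast at hn
        have : (m : ℚ) * B atil atil = -(B α₀ α₀) := by rw [← hm, hmsym]; linarith
        rcases lt_trichotomy (m : ℚ) 0 with h | h | h
        · have hmz : m < 0 := by exact_mod_cast h
          have hm' : m ≤ -1 := by omega
          have hm1 : (m : ℚ) ≤ -1 := by exact_mod_cast hm'
          nlinarith
        · rw [h] at this; simp at this; linarith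
        · have hmz : 0 < m := by exact_mod_cast h
          have hm' : 1 ≤ m := by omega
          have hm1 : (1 : ℚ) ≤ (m : ℚ) := by exact_mod_cast hm'
          nlinarith
      · push_cast at hn; linarith
      · exfalso
        push_cast at hn
        have : (m : ℚ) * B atil atil = B α₀ α₀ := by rw [← hm, hmsym]; linarith
        rcases lt_trichotomy (m : ℚ) 0 with h | h | h
        · have hmz : m < 0 := by exact_mod_cast h
          have hm' : m ≤ -1 := by omega
          have hm1 : (m : ℚ) ≤ -1 := by exact_mod_cast hm'
          nlinarith
        · rw [h] at this; simp at this; linarith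
        · have hmz : 0 < m := by exact_mod_cast h
          have hm' : 1 ≤ m := by omega
          have hm1 : (1 : ℚ) ≤ (m : ℚ) := by exact_mod_cast hm'
          nlinarith
      · exfalso
        have : B δ α₀ = B α₀ α₀ := by push_cast at hn; linarith
        have hd := lC2 δ hδ this
        rw [hd] at hbb; linarith
    have step2 : ∀ σ ∈ Φpos, 0 ≤ B σ atil := by
      intro σ hσ
      by_contra h
      push_neg at h
      have hσΦ := hps hσ
      obtain ⟨k, hk⟩ := hR3 atil hatΦ σ hσΦ
      have hσσ := hR4 σ hσΦ
      have hBat : B atil σ < 0 := by rw [hsym]; exact h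
      have hkq : (k : ℚ) < 0 := by nlinarith
      have hkneg : k ≤ -1 := by
        have : k < 0 := by exact_mod_cast hkq
        omega
      have hδΦ : atil - k • σ ∈ Φ := hR5 atil hatΦ σ hσΦ k hk
      have hBright : ∀ x y z : V, B z (x - y) = B z x - B z y := by
        intro x y z; rw [hsym, Bsub hadd, hsym x z, hsym y z]
      have hBrightz : ∀ (n : ℤ) (x z : V), B z (n • x) = n * B z x := by
        intro n x z; rw [hsym, Bzsmul hadd, hsym]
      have hXa : B (atil - k • σ) atil = B atil atil - (k : ℚ) * B σ atil := by
        rw [Bsub hadd, Bzsmul hadd]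
      have hXs : B (atil - k • σ) σ = B atil σ - (k : ℚ) * B σ σ := by
        rw [Bsub hadd, Bzsmul hadd]
      have hδδ : B (atil - k • σ) (atil - k • σ) = B atil atil := by
        have e1 : B (atil - k • σ) (atil - k • σ)
            = B (atil - k • σ) atil - (k : ℚ) * B (atil - k • σ) σ := by
          rw [hBright, hBrightz]
        rw [e1, hXa, hXs, hsym σ atil]
        linear_combination (-(k : ℚ)) * hk
      have hδα₀ : B (atil - k • σ) α₀ = 0 := step1 _ hδΦ hδδ
      have hcl := hdom _ hδΦ hδδ hδα₀
      have he : atil - (atil - k • σ) = k • σ := by abel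
      rw [he] at hcl
      have hnk : -(k • σ) ∈ AddSubmonoid.closure (↑Φpos : Set V) := by
        have h1 : -(k • σ) = ((-k).toNat : ℕ) • σ := by
          rw [← natCast_zsmul, Int.toNat_of_nonneg (by omega : (0:ℤ) ≤ -k), neg_smul]
        rw [h1]
        exact AddSubmonoid.nsmul_mem _ (memcl σ hσ) _
      have hz := oppo _ hcl hnk
      have : B (k • σ) σ = 0 := by rw [hz]; exact Bzero hadd _
      rw [Bzsmul hadd] at this
      nlinarith
    have step3 := clpos atil step2
    have h1 : α₀ - atil ∈ AddSubmonoid.closure (↑Φpos : Set V) := hhigh atil hatΦ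
    have h2 := step3 _ h1
    rw [Bsub hadd] at h2
    have h3 : B α₀ atil = 0 := by rw [hsym]; exact hortho
    linarith
  · -- k3
    have hsplit := Finset.sum_filter_add_sum_filter_not Φpos (fun μ => B μ α₀ = 0)
      (fun μ => B μ atil)
    have hBα₀atil : B α₀ atil = 0 := by rw [hsym]; exact hortho
    have hset : Φpos.filter (fun μ => ¬ (B μ α₀ = 0)) = insert α₀ T1 := by
      ext μ
      rw [Finset.mem_filter, Finset.mem_insert]
      constructor
      · rintro ⟨hμ, hne⟩
        rcases levcases μ hμ with h | h | h
        · exact absurd h hne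
        · exact Or.inr (Finset.mem_filter.mpr ⟨hps hμ, h⟩)
        · exact Or.inl (lC2 μ (hps hμ) h)
      · rintro (rfl | h)
        · exact ⟨α₀pos, by intro h; rw [h] at a_pos; exact lt_irrefl 0 a_pos⟩
        · refine ⟨T1sub h, ?_⟩
          have := (Finset.mem_filter.mp h).2
          intro hz; rw [hz] at this; simp at this; linarith
    have hinv : ∑ μ ∈ T1, B μ atil = 0 := by
      apply Finset.sum_involution (g := fun μ _ => α₀ - μ)
      · intro μ hμ
        have : B μ atil + B (α₀ - μ) atil = B α₀ atil := by
          rw [← hadd]; congr 1; abel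
        rw [this, hBα₀atil]
      · intro μ hμ hfne heq
        apply hfne
        have : B μ atil + B (α₀ - μ) atil = B α₀ atil := by
          rw [← hadd]; congr 1; abel
        rw [heq, hBα₀atil] at this
        linarith
      · intro μ hμ
        obtain ⟨hμΦ, hμc⟩ := Finset.mem_filter.mp hμ
        have hmne : α₀ ≠ μ := by
          intro h; rw [← h] at hμc; linarith
        have hBneg' : B α₀ (-μ) < 0 := by
          rw [hsym, Bneg hadd]; linarith
        have h1 : α₀ + (-μ) ∈ Φ :=
          hR2 α₀ hα₀Φ (-μ) (hR1 μ hμΦ) hBneg' (by rw [neg_neg]; exact hmne)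
        have h2 : α₀ - μ ∈ Φ := by rw [sub_eq_add_neg]; exact h1
        refine Finset.mem_filter.mpr ⟨h2, ?_⟩
        rw [Bsub hadd]; linarith
      · intro μ _; abel
    rw [← hsplit, hset, Finset.sum_insert α₀notT1, hinv, hBα₀atil]
    ring

end Core
end Stmt6Aux
end

noncomputable section

namespace Stmt6

variable {L : Type*} [LieRing L] [LieAlgebra ℂ L] (H : LieSubalgebra ℂ L)

/-- The root space of a linear functional `α` on the Cartan subalgebra `H`: the
simultaneous eigenspace of the operators `ad h`, `h ∈ H`, with eigenvalues `α h`. -/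
def rootSpace' (α : Module.Dual ℂ H) : Submodule ℂ L where
  carrier := {x | ∀ h : H, ⁅(h : L), x⁆ = α h • x}
  add_mem' := fun {a b} ha hb => by
    intro h; rw [lie_add, ha h, hb h, smul_add]
  zero_mem' := by intro h; rw [lie_zero, smul_zero]
  smul_mem' := fun c x hx => by
    intro h; rw [lie_smul, hx h, smul_comm]

/-- `α` is a root of `L` with respect to the Cartan subalgebra `H`. -/
def IsRootOf (α : Module.Dual ℂ H) : Prop := α ≠ 0 ∧ rootSpace' H α ≠ ⊥

/-- `α` is a simple root: a positive root which is not the sum of two positive roots. -/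
def IsSimpleRootOf (Φpos : Finset (Module.Dual ℂ H)) (α : Module.Dual ℂ H) : Prop :=
  α ∈ Φpos ∧ ∀ β ∈ Φpos, ∀ γ ∈ Φpos, α ≠ β + γ

/-- Nonnegative integer combinations of the simple roots. -/
def posCone (Φpos : Finset (Module.Dual ℂ H)) : AddSubmonoid (Module.Dual ℂ H) :=
  AddSubmonoid.closure {μ | IsSimpleRootOf H Φpos μ}

/-- `α₀` is the highest root: it is a root and `α₀ - γ` is a nonnegative integer
combination of simple roots, for every root `γ`. -/
def IsHighestRootOf (Φ Φpos : Finset (Module.Dual ℂ H)) (α₀ : Module.Dual ℂ H) : Prop :=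
  α₀ ∈ Φ ∧ ∀ γ ∈ Φ, α₀ - γ ∈ posCone H Φpos

/-- `γ` is a long root: its squared length, with respect to the invariant form `B`,
is maximal among all roots. -/
def IsLongRootOf (Φ : Finset (Module.Dual ℂ H))
    (B : Module.Dual ℂ H → Module.Dual ℂ H → ℚ) (γ : Module.Dual ℂ H) : Prop :=
  γ ∈ Φ ∧ ∀ δ ∈ Φ, B δ δ ≤ B γ γ

/-- `τ` is a highest long root orthogonal to all the elements of `S`:  it is a long root
orthogonal to `S` dominating every long root orthogonal to `S`. -/
def IsHighestLongRootOrtho (Φ Φpos : Finset (Module.Dual ℂ H))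
    (B : Module.Dual ℂ H → Module.Dual ℂ H → ℚ) (S : Set (Module.Dual ℂ H))
    (τ : Module.Dual ℂ H) : Prop :=
  IsLongRootOf H Φ B τ ∧ (∀ s ∈ S, B τ s = 0) ∧
    ∀ γ, IsLongRootOf H Φ B γ → (∀ s ∈ S, B γ s = 0) → τ - γ ∈ posCone H Φpos

/-- The sequence `r 1, …, r k` of mutually orthogonal long roots of the paper:
`r 1 = α₀` is the highest root, and inductively `r i` is a highest long root
orthogonal to `r 1, …, r (i-1)`. -/
def IsOrthogonalRootSeq (Φ Φpos : Finset (Module.Dual ℂ H))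
    (B : Module.Dual ℂ H → Module.Dual ℂ H → ℚ)
    (r : ℕ → Module.Dual ℂ H) (k : ℕ) : Prop :=
  IsHighestRootOf H Φ Φpos (r 1) ∧
    ∀ i, 2 ≤ i → i ≤ k →
      IsHighestLongRootOrtho H Φ Φpos B {s | ∃ j, 1 ≤ j ∧ j < i ∧ s = r j} (r i)

/-- `σ` is a dominant (integral) weight: it pairs with the coroot of every positive
root in a nonnegative integer. -/
def IsDominantOf (Φpos : Finset (Module.Dual ℂ H))
    (B : Module.Dual ℂ H → Module.Dual ℂ H → ℚ) (σ : Module.Dual ℂ H) : Prop :=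
  ∀ μ ∈ Φpos, ∃ n : ℕ, 2 * B σ μ = n * B μ μ


lemma mem_rootSpace' {α : Module.Dual ℂ H} {x : L} :
    x ∈ rootSpace' H α ↔ ∀ h : H, ⁅(h : L), x⁆ = α h • x := Iff.rfl

lemma rootSpace'_ne_bot_iff [FiniteDimensional ℂ L] [H.IsCartanSubalgebra]
    [LieAlgebra.IsKilling ℂ L] (f : Module.Dual ℂ H) :
    rootSpace' H f ≠ ⊥ ↔ LieAlgebra.rootSpace H ⇑f ≠ ⊥ := by
  constructor
  · intro hf hbot
    obtain ⟨x, hx, hx0⟩ := (Submodule.ne_bot_iff _).mp hf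
    have hxw : x ∈ LieAlgebra.rootSpace H ⇑f := by
      rw [LieAlgebra.rootSpace, LieModule.mem_genWeightSpace]
      intro y
      refine ⟨1, ?_⟩
      have hb : ⁅(y : L), x⁆ = f y • x := (mem_rootSpace' H).mp hx y
      simp only [pow_one, LinearMap.sub_apply, LieModule.toEnd_apply_apply,
        LinearMap.smul_apply, Module.End.one_apply]
      rw [LieSubalgebra.coe_bracket_of_module, hb, sub_self]
    rw [hbot] at hxw
    exact hx0 (by simpa using hxw)
  · intro hf
    have hex : ∃ x ∈ LieAlgebra.rootSpace H ⇑f, x ≠ 0 := by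
      by_contra hall
      push_neg at hall
      exact hf ((LieSubmodule.eq_bot_iff _).mpr hall)
    obtain ⟨x, hx, hx0⟩ := hex
    refine (Submodule.ne_bot_iff _).mpr ⟨x, (mem_rootSpace' H).mpr fun h => ?_, hx0⟩
    have := LieAlgebra.IsKilling.lie_eq_smul_of_mem_rootSpace hx h
    rwa [LieSubalgebra.coe_bracket_of_module] at this
/-- Notation: `α₀` is the highest root with coroot `Hc0`; `ᾶ` is a
highest long root orthogonal to `α₀` (the highest root of the relevant simple factor
of the centralizer `h` of the `sl₂`-triple); `twoRho` is the sum of the positive roots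
of `g`; `twoRhoH` is the sum of the positive roots of `h` (the positive roots of `g`
vanishing on `Hc0`); `dim g₁ = 2v`; `hcox = (ᾶ + 2ρ_h, ᾶ)/(ᾶ, ᾶ)` is the dual Coxeter
number of the simple factor of `h` containing `ᾶ`; `B` is normalized so that the
adjoint representation has Casimir eigenvalue 1.  Vogel's parameters `t', β', γ'`
are normalized by `α = -2`, i.e. `t' = -2 + β' + γ'`, the Casimir eigenvalue of the
Cartan square is `2(2t' - α') = 4t' + 4` and that of the component of highest weight
`α₀ + ᾶ` is `2(2t' - β')`, both w.r.t. the scalar product `2t' • B` for which the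
adjoint representation has Casimir eigenvalue `2t'`.  Conclusions: the two Casimir
eigenvalues w.r.t. `B` are `2(v+3)/(v+2)` and `(v+h+2)/(v+2)`, and consequently
`β' = h' + 2`, `γ' = h + 2`, `t' = v + 2`, and `t'` is the dual Coxeter number of `g`. -/
theorem casimir_eigenvalues_S2g_and_vogel_parameters
    {L : Type*} [LieRing L] [LieAlgebra ℂ L] [FiniteDimensional ℂ L]
    [LieAlgebra.IsSimple ℂ L]
    (hnotA1 : ¬ Nonempty (L ≃ₗ⁅ℂ⁆ ↥(LieAlgebra.SpecialLinear.sl (Fin 2) ℂ)))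
    (H : LieSubalgebra ℂ L) [H.IsCartanSubalgebra]
    (Φ Φpos : Finset (Module.Dual ℂ H))
    (hΦ : ∀ a, a ∈ Φ ↔ IsRootOf H a)
    (hpos_sub : Φpos ⊆ Φ)
    (hpos_mem : ∀ a ∈ Φ, (a ∈ Φpos ↔ -a ∉ Φpos))
    (hpos_add : ∀ a ∈ Φpos, ∀ b ∈ Φpos, a + b ∈ Φ → a + b ∈ Φpos)
    -- `B` is an invariant scalar product on weights: it is symmetric, biadditive,
    -- ℚ-homogeneous, and on roots it is a positive multiple `c` of the scalar product
    -- induced by the Killing form (via the covector map `tcov`).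
    (B : Module.Dual ℂ H → Module.Dual ℂ H → ℚ)
    (hBsymm : ∀ x y, B x y = B y x)
    (hBadd : ∀ x y z, B (x + y) z = B x z + B y z)
    (hBsmul : ∀ (q : ℚ) (x y), B ((q : ℂ) • x) y = q * B x y)
    (tcov : Module.Dual ℂ H → H)
    (htcov : ∀ (a : Module.Dual ℂ H) (h : H), killingForm ℂ L (tcov a : L) (h : L) = a h)
    (c : ℚ) (hcpos : 0 < c)
    (hBkill : ∀ a ∈ Φ, ∀ b ∈ Φ, (B a b : ℂ) = (c : ℂ) * a (tcov b))
    (α₀ : Module.Dual ℂ H) (hα₀ : IsHighestRootOf H Φ Φpos α₀)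
    -- the coroot of `α₀`
    (Hc0 : H) (hHc0 : ∀ μ ∈ Φ, (B α₀ α₀ : ℂ) * μ Hc0 = 2 * (B μ α₀ : ℂ))
    -- `ᾶ`, a highest long root orthogonal to `α₀`
    (atil : Module.Dual ℂ H)
    (hatil : IsHighestLongRootOrtho H Φ Φpos B {α₀} atil)
    -- `2v = dim g₁` is the number of roots of level 1
    (v : ℕ) (hv : (Φ.filter fun μ => μ Hc0 = 1).card = 2 * v)
    -- normalization: the adjoint representation has Casimir eigenvalue 1
    (hnormB : B (α₀ + ∑ μ ∈ Φpos, μ) α₀ = 1)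
    -- `hcox` is the dual Coxeter number of the simple factor of `h` containing `ᾶ`
    (hcox : ℚ)
    (hhcox : B (atil + ∑ μ ∈ Φpos.filter fun μ => μ Hc0 = 0, μ) atil =
      hcox * B atil atil)
    -- Vogel's parameters, normalized so that `α' = -2`
    (α' β' γ' t' : ℚ) (hα' : α' = -2) (ht' : t' = α' + β' + γ')
    (hCartanSq : 2 * t' * B ((2 : ℂ) • α₀ + ∑ μ ∈ Φpos, μ) ((2 : ℂ) • α₀) =
      2 * (2 * t' - α'))
    (hY2 : 2 * t' * B (α₀ + atil + ∑ μ ∈ Φpos, μ) (α₀ + atil) = 2 * (2 * t' - β')) :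
    B ((2 : ℂ) • α₀ + ∑ μ ∈ Φpos, μ) ((2 : ℂ) • α₀) = 2 * ((v : ℚ) + 3) / ((v : ℚ) + 2) ∧
    B (α₀ + atil + ∑ μ ∈ Φpos, μ) (α₀ + atil) = ((v : ℚ) + hcox + 2) / ((v : ℚ) + 2) ∧
    β' = ((v : ℚ) - hcox) + 2 ∧
    γ' = hcox + 2 ∧
    t' = (v : ℚ) + 2 ∧
    t' * B α₀ α₀ = B (α₀ + ∑ μ ∈ Φpos, μ) α₀ := by

  classical
  -- Step 0: the Killing form of `L` is nondegenerate.
  have hKill : LieAlgebra.IsKilling ℂ L := by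
    constructor
    rcases LieAlgebra.IsSimple.eq_bot_or_eq_top (R := ℂ) (LieIdeal.killingCompl ℂ L ⊤) with h | h
    · exact h
    · exfalso
      have hzero : ∀ x y : L, killingForm ℂ L x y = 0 := by
        intro x y
        have hy : y ∈ LieIdeal.killingCompl ℂ L ⊤ := by rw [h]; trivial
        exact (LieIdeal.mem_killingCompl ℂ L ⊤).mp hy x trivial
      have hH0 : ∀ x : H, x = 0 := by
        intro x
        refine (Module.forall_dual_apply_eq_zero_iff ℂ x).mp fun f => ?_
        rw [← htcov f x]; exact hzero _ _
      have hall : ∀ x : L, x ∈ H := by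
        intro x
        have hx : x ∈ H.normalizer := by
          rw [LieSubalgebra.mem_normalizer_iff]
          intro y hy
          have h0 : y = 0 := congrArg Subtype.val (hH0 ⟨y, hy⟩)
          rw [h0, lie_zero]; exact H.zero_mem
        rwa [LieSubalgebra.IsCartanSubalgebra.self_normalizing] at hx
      have habelian : IsLieAbelian L := by
        constructor
        intro x y
        have hx0 : x = (0 : L) := congrArg Subtype.val (hH0 ⟨x, hall x⟩)
        rw [hx0, zero_lie]
      exact LieAlgebra.IsSimple.non_abelian ℂ (L := L) habelian
  haveI := hKill
  -- Step 1: root set bridge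
  have hΦ' : ∀ f : Module.Dual ℂ H, f ∈ Φ ↔ (f ≠ 0 ∧ LieAlgebra.rootSpace H ⇑f ≠ ⊥) := by
    intro f
    rw [hΦ f, IsRootOf, rootSpace'_ne_bot_iff]
  have hwt : ∀ f : Module.Dual ℂ H, f ∈ Φ →
      ∃ w : LieModule.Weight ℂ H L, (⇑w : H → ℂ) = ⇑f ∧ w.IsNonZero := by
    intro f hf
    obtain ⟨hne, hrs⟩ := (hΦ' f).mp hf
    refine ⟨⟨⇑f, hrs⟩, rfl, ?_⟩
    intro hz
    exact hne (by ext x; exact congrFun hz x)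
  have h0Φ : (0 : Module.Dual ℂ H) ∉ Φ := fun h => (((hΦ' 0).mp h).1) rfl
  -- Step 2: tcov agrees with the inverse of the Cartan–Killing duality
  have htcov' : ∀ (w : LieModule.Weight ℂ H L) (f : Module.Dual ℂ H), (⇑w : H → ℂ) = ⇑f →
      (LieAlgebra.IsKilling.cartanEquivDual H).symm (LieModule.Weight.toLinear ℂ H L w)
        = tcov f := by
    intro w f hw
    rw [LinearEquiv.symm_apply_eq]
    ext x
    have h1 : (LieAlgebra.IsKilling.cartanEquivDual H) (tcov f) x
        = killingForm ℂ L (tcov f : L) (x : L) := by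
      rw [LieAlgebra.IsKilling.cartanEquivDual_apply_apply]
      rfl
    rw [h1, htcov f x, LieModule.Weight.toLinear_apply, hw]
  have hfne0 : ∀ f ∈ Φ, f (tcov f) ≠ 0 := by
    intro f hf
    obtain ⟨w, hw, hnz⟩ := hwt f hf
    have h1 := LieAlgebra.IsKilling.root_apply_cartanEquivDual_symm_ne_zero (H := H) hnz
    rw [htcov' w f hw] at h1
    rwa [show (w : H → ℂ) (tcov f) = f (tcov f) from congrFun hw _] at h1
  have hcne : ((c : ℚ) : ℂ) ≠ 0 := by
    simpa using (ne_of_gt hcpos)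
  have hBff : ∀ f ∈ Φ, B f f ≠ 0 := by
    intro f hf h0
    apply hfne0 f hf
    have h1 := hBkill f hf f hf
    rw [h0] at h1
    have : (c : ℂ) * f (tcov f) = 0 := by exact_mod_cast h1.symm
    rcases mul_eq_zero.mp this with h | h
    · exact absurd h hcne
    · exact h
  have hBffC : ∀ f ∈ Φ, ((B f f : ℚ) : ℂ) ≠ 0 := by
    intro f hf
    exact_mod_cast (hBff f hf)
  -- Step 3: the coroot pairing formula
  have hpair : ∀ f ∈ Φ, ∀ g ∈ Φ, ∀ w : LieModule.Weight ℂ H L, (⇑w : H → ℂ) = ⇑g →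
      ((B g g : ℚ) : ℂ) * f (LieAlgebra.IsKilling.coroot w) = 2 * ((B f g : ℚ) : ℂ) := by
    intro f hf g hg w hw
    have ht := htcov' w g hw
    rw [LieAlgebra.IsKilling.coroot, ht]
    have hwg : (w : H → ℂ) (tcov g) = g (tcov g) := congrFun hw _
    rw [map_nsmul, map_smul, hwg]
    have h1 : ((B f g : ℚ) : ℂ) = (c : ℂ) * f (tcov g) := hBkill f hf g hg
    have h2 : ((B g g : ℚ) : ℂ) = (c : ℂ) * g (tcov g) := hBkill g hg g hg
    have h3 := hfne0 g hg
    rw [h1, h2, smul_eq_mul, nsmul_eq_mul]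
    field_simp
    ring
  -- Step 4: the root-system facts
  have hR1 : ∀ f ∈ Φ, -f ∈ Φ := by
    intro f hf
    obtain ⟨w, hw, hnz⟩ := hwt f hf
    refine (hΦ' _).mpr ⟨neg_ne_zero.mpr ((hΦ' f).mp hf).1, ?_⟩
    have hc : (⇑(-w) : H → ℂ) = ⇑(-f) := by
      rw [LieModule.Weight.coe_neg, hw]; rfl
    rw [← hc]
    exact (-w).genWeightSpace_ne_bot
  have hR3 : ∀ f ∈ Φ, ∀ g ∈ Φ, ∃ n : ℤ, 2 * B f g = n * B g g := by
    intro f hf g hg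
    obtain ⟨wf, hwf, hnzf⟩ := hwt f hf
    obtain ⟨wg, hwg, hnzg⟩ := hwt g hg
    have hz := LieAlgebra.IsKilling.apply_coroot_eq_cast (α := wg) (β := wf)
    have hfz : f (LieAlgebra.IsKilling.coroot wg)
        = (((LieModule.chainBotCoeff (⇑wg) wf : ℤ) - (LieModule.chainTopCoeff (⇑wg) wf : ℤ) : ℤ) : ℂ) := by
      rw [← hz]; exact (congrFun hwf _).symm
    refine ⟨(LieModule.chainBotCoeff (⇑wg) wf : ℤ) - (LieModule.chainTopCoeff (⇑wg) wf : ℤ), ?_⟩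
    have hp := hpair f hf g hg wg hwg
    rw [hfz] at hp
    have hq : 2 * B f g = B g g
        * (((LieModule.chainBotCoeff (⇑wg) wf : ℤ) - (LieModule.chainTopCoeff (⇑wg) wf : ℤ) : ℤ) : ℚ) := by
      exact_mod_cast hp.symm
    linarith
  have hcoroot_val : ∀ f ∈ Φ, ∀ g ∈ Φ, ∀ w : LieModule.Weight ℂ H L, (⇑w : H → ℂ) = ⇑g →
      ∀ n : ℤ, 2 * B f g = n * B g g → f (LieAlgebra.IsKilling.coroot w) = (n : ℂ) := by
    intro f hf g hg w hw n hn
    have hp := hpair f hf g hg w hw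
    have hQ : B g g * (n : ℚ) = 2 * B f g := by linarith
    have h2 : ((B g g : ℚ) : ℂ) * (n : ℂ) = 2 * ((B f g : ℚ) : ℂ) := by
      exact_mod_cast hQ
    rw [← h2] at hp
    exact mul_left_cancel₀ (hBffC g hg) hp
  have hR5 : ∀ f ∈ Φ, ∀ g ∈ Φ, ∀ n : ℤ, 2 * B f g = n * B g g → f - n • g ∈ Φ := by
    intro f hf g hg n hn
    obtain ⟨wf, hwf, hnzf⟩ := hwt f hf
    obtain ⟨wg, hwg, hnzg⟩ := hwt g hg
    have hval : wf (LieAlgebra.IsKilling.coroot wg) = (n : ℂ) := by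
      rw [show (wf : H → ℂ) (LieAlgebra.IsKilling.coroot wg)
          = f (LieAlgebra.IsKilling.coroot wg) from congrFun hwf _]
      exact hcoroot_val f hf g hg wg hwg n hn
    have hco : (⇑(LieAlgebra.IsKilling.reflectRoot wg wf) : H → ℂ)
        = ⇑wf - wf (LieAlgebra.IsKilling.coroot wg) • ⇑wg := rfl
    have hdc : (⇑(LieAlgebra.IsKilling.reflectRoot wg wf) : H → ℂ) = ⇑(f - n • g) := by
      funext x
      have h1 : (⇑(LieAlgebra.IsKilling.reflectRoot wg wf) : H → ℂ) x
          = f x - (n : ℂ) * g x := by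
        rw [hco]
        simp only [Pi.sub_apply, Pi.smul_apply, smul_eq_mul, hval, hwf, hwg]
      have h2 : (⇑(f - n • g) : H → ℂ) x = f x - (n : ℂ) * g x := by
        simp [zsmul_eq_mul]
      rw [h1, h2]
    have hnz' := LieAlgebra.IsKilling.reflectRoot_isNonZero wg wf hnzf
    refine (hΦ' _).mpr ⟨?_, ?_⟩
    · intro h0
      apply hnz'
      rw [LieModule.Weight.IsZero, hdc, h0]
      rfl
    · rw [← hdc]
      exact (LieAlgebra.IsKilling.reflectRoot wg wf).genWeightSpace_ne_bot
  -- Step 5: positivity of root norms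
  have hrootmem : ∀ w : LieModule.Weight ℂ H L, w.IsNonZero →
      LieModule.Weight.toLinear ℂ H L w ∈ Φ := by
    intro w hnz
    refine (hΦ' _).mpr ⟨?_, ?_⟩
    · rw [Ne, LieModule.Weight.coe_toLinear_eq_zero_iff]; exact hnz
    · have hco : (⇑(LieModule.Weight.toLinear ℂ H L w) : H → ℂ) = ⇑w := rfl
      rw [hco]
      exact w.genWeightSpace_ne_bot
  have hsumval : ∀ x : H, killingForm ℂ L (x : L) (x : L)
      = ∑ w ∈ (LieSubalgebra.root : Finset (LieModule.Weight ℂ H L)), (w x) * (w x) := by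
    intro x
    have h := LieAlgebra.IsKilling.restrict_killingForm_eq_sum (K := ℂ) (L := L) (H := H)
    have hstep : ∀ (s : Finset (LieModule.Weight ℂ H L)),
        ((∑ α ∈ s, (LieModule.Weight.toLinear ℂ H L α).smulRight
          (LieModule.Weight.toLinear ℂ H L α)) x) x = ∑ α ∈ s, (α x * α x) := by
      intro s
      induction s using Finset.induction_on with
      | empty => simp
      | insert _ _ hne ih =>
          rw [Finset.sum_insert hne, LinearMap.add_apply, LinearMap.add_apply, ih,
            Finset.sum_insert hne]
          simp only [LinearMap.smulRight_apply, LinearMap.smul_apply, smul_eq_mul]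
          rfl
    calc killingForm ℂ L (x : L) (x : L)
        = (((killingForm ℂ L).restrict H.toSubmodule) x) x := rfl
      _ = _ := by rw [h]; exact hstep _
  have hR4 : ∀ f ∈ Φ, 0 < B f f := by
    intro f hf
    have hne := hBff f hf
    have hterm : ∀ w ∈ (LieSubalgebra.root : Finset (LieModule.Weight ℂ H L)),
        (((B (LieModule.Weight.toLinear ℂ H L w) f) ^ 2 : ℚ) : ℂ)
          = (c : ℂ) ^ 2 * ((w (tcov f)) * (w (tcov f))) := by
      intro w hw
      have hnz : w.IsNonZero := by
        simpa [LieSubalgebra.root] using hw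
      have h1 := hBkill _ (hrootmem w hnz) f hf
      have h2 : (LieModule.Weight.toLinear ℂ H L w) (tcov f) = w (tcov f) := rfl
      rw [h2] at h1
      push_cast
      rw [h1]
      ring
    have hkey : (c : ℂ) * ((B f f : ℚ) : ℂ)
        = ∑ w ∈ (LieSubalgebra.root : Finset (LieModule.Weight ℂ H L)),
            (((B (LieModule.Weight.toLinear ℂ H L w) f) ^ 2 : ℚ) : ℂ) := by
      have h0 := hsumval (tcov f)
      rw [htcov f (tcov f)] at h0
      rw [Finset.sum_congr rfl hterm, ← Finset.mul_sum, ← h0, hBkill f hf f hf]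
      ring
    have hkeyQ : c * B f f
        = ∑ w ∈ (LieSubalgebra.root : Finset (LieModule.Weight ℂ H L)),
            (B (LieModule.Weight.toLinear ℂ H L w) f) ^ 2 := by
      exact_mod_cast hkey
    have hsq : (0 : ℚ) ≤ ∑ w ∈ (LieSubalgebra.root : Finset (LieModule.Weight ℂ H L)),
        (B (LieModule.Weight.toLinear ℂ H L w) f) ^ 2 :=
      Finset.sum_nonneg fun w _ => sq_nonneg _
    rcases lt_trichotomy (B f f) 0 with h | h | h
    · nlinarith
    · exact absurd h hne
    · exact h
  have hR2 : ∀ f ∈ Φ, ∀ g ∈ Φ, B f g < 0 → f ≠ -g → f + g ∈ Φ := by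
    intro f hf g hg hB hne
    obtain ⟨wf, hwf, hnzf⟩ := hwt f hf
    obtain ⟨wg, hwg, hnzg⟩ := hwt g hg
    set q : ℕ := LieModule.chainBotCoeff (⇑wg) wf with hq
    set r : ℕ := LieModule.chainTopCoeff (⇑wg) wf with hr
    have hz := LieAlgebra.IsKilling.apply_coroot_eq_cast (α := wg) (β := wf)
    have hfz : f (LieAlgebra.IsKilling.coroot wg) = (((q : ℤ) - (r : ℤ) : ℤ) : ℂ) := by
      rw [← hz]; exact (congrFun hwf _).symm
    have hp := hpair f hf g hg wg hwg
    rw [hfz] at hp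
    have hQ : 2 * B f g = B g g * (((q : ℤ) - (r : ℤ) : ℤ) : ℚ) := by
      exact_mod_cast hp.symm
    have hzneg : ((((q : ℤ) - (r : ℤ)) : ℤ) : ℚ) < 0 := by
      have hgg := hR4 g hg
      nlinarith
    have hzneg' : (q : ℤ) - (r : ℤ) < 0 := by exact_mod_cast hzneg
    have hr1 : (1 : ℤ) ≤ (r : ℤ) := by omega
    have hnebot : LieAlgebra.rootSpace H ((1 : ℤ) • (⇑wg : H → ℂ) + ⇑wf) ≠ ⊥ := by
      rw [LieAlgebra.IsKilling.rootSpace_zsmul_add_ne_bot_iff wg wf hnzg 1]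
      constructor
      · exact_mod_cast hr1
      · omega
    have hfun : ((1 : ℤ) • (⇑wg : H → ℂ) + ⇑wf) = ⇑(f + g) := by
      rw [one_smul, hwf, hwg]
      funext x
      simp only [Pi.add_apply, LinearMap.add_apply]
      ring
    refine (hΦ' _).mpr ⟨?_, ?_⟩
    · intro h0
      exact hne (eq_neg_of_add_eq_zero_left h0)
    · rw [← hfun]; exact hnebot
  -- Step 6: instantiate the combinatorial lemma
  have hcone : posCone H Φpos ≤ AddSubmonoid.closure (↑Φpos : Set (Module.Dual ℂ H)) :=
    AddSubmonoid.closure_mono (fun μ hμ => hμ.1)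
  have hhigh : ∀ γ ∈ Φ, α₀ - γ ∈ AddSubmonoid.closure (↑Φpos : Set (Module.Dual ℂ H)) :=
    fun γ hγ => hcone (hα₀.2 γ hγ)
  have hatΦ : atil ∈ Φ := hatil.1.1
  have hlong : ∀ δ ∈ Φ, B δ δ ≤ B atil atil := fun δ hδ => hatil.1.2 δ hδ
  have hortho : B atil α₀ = 0 := hatil.2.1 α₀ rfl
  have hdom : ∀ γ ∈ Φ, B γ γ = B atil atil → B γ α₀ = 0 →
      atil - γ ∈ AddSubmonoid.closure (↑Φpos : Set (Module.Dual ℂ H)) := by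
    intro γ hγ hlen horth'
    refine hcone (hatil.2.2 γ ⟨hγ, fun δ hδ => hlen ▸ hatil.1.2 δ hδ⟩ ?_)
    intro s hs
    rw [Set.mem_singleton_iff] at hs
    rw [hs]; exact horth'
  obtain ⟨k1, k2, k3⟩ := Stmt6Aux.key Φ Φpos B hBsymm hBadd h0Φ hpos_sub hpos_mem hpos_add
    hR1 hR2 hR3 hR5 hR4 hα₀.1 hhigh hatΦ hlong hortho hdom
  -- Step 7: translate the level sets
  have a_pos : 0 < B α₀ α₀ := hR4 α₀ hα₀.1
  have haC : ((B α₀ α₀ : ℚ) : ℂ) ≠ 0 := hBffC α₀ hα₀.1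
  have hfilter1 : Φ.filter (fun μ => μ Hc0 = 1) = Φ.filter (fun μ => 2 * B μ α₀ = B α₀ α₀) := by
    apply Finset.filter_congr
    intro μ hμ
    have hμc := hHc0 μ hμ
    constructor
    · intro h1
      rw [h1, mul_one] at hμc
      have : B α₀ α₀ = 2 * B μ α₀ := by exact_mod_cast hμc
      linarith
    · intro h2
      have h3 : (2 : ℂ) * ((B μ α₀ : ℚ) : ℂ) = ((B α₀ α₀ : ℚ) : ℂ) := by
        exact_mod_cast congrArg (fun x : ℚ => (x : ℂ)) h2
      rw [h3] at hμc
      have := mul_left_cancel₀ haC (hμc.trans (mul_one ((B α₀ α₀ : ℚ) : ℂ)).symm)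
      exact this
  have hfilter0 : Φpos.filter (fun μ => μ Hc0 = 0) = Φpos.filter (fun μ => B μ α₀ = 0) := by
    apply Finset.filter_congr
    intro μ hμ
    have hμc := hHc0 μ (hpos_sub hμ)
    constructor
    · intro h1
      rw [h1, mul_zero] at hμc
      have : (0 : ℚ) = 2 * B μ α₀ := by exact_mod_cast hμc
      linarith
    · intro h2
      have h3 : ((B μ α₀ : ℚ) : ℂ) = 0 := by exact_mod_cast congrArg (fun x : ℚ => (x : ℂ)) h2
      rw [h3, mul_zero] at hμc
      rcases mul_eq_zero.mp hμc with h | h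
      · exact absurd h haC
      · exact h
  have hcard : (((Φ.filter fun μ => 2 * B μ α₀ = B α₀ α₀).card : ℕ) : ℚ) = 2 * (v : ℚ) := by
    rw [← hfilter1, hv]; push_cast; ring
  -- Step 8: expansions of the bilinear expressions
  have hBsum : ∀ (s : Finset (Module.Dual ℂ H)) (z : Module.Dual ℂ H),
      B (∑ μ ∈ s, μ) z = ∑ μ ∈ s, B μ z := fun s z => Stmt6Aux.Bfsum hBadd s (fun μ => μ) z
  have hsmul2 : ∀ x y : Module.Dual ℂ H, B ((2 : ℂ) • x) y = 2 * B x y := by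
    intro x y
    have h2c : ((2 : ℚ) : ℂ) = (2 : ℂ) := by norm_num
    rw [← h2c, hBsmul]
  have horth2 : B α₀ atil = 0 := by rw [hBsymm]; exact hortho
  have hXa : ∀ y, B (α₀ + atil + ∑ μ ∈ Φpos, μ) y
      = B α₀ y + B atil y + ∑ μ ∈ Φpos, B μ y := by
    intro y; rw [hBadd, hBadd, hBsum]
  have E0 : B (α₀ + ∑ μ ∈ Φpos, μ) α₀ = B α₀ α₀ + ∑ μ ∈ Φpos, B μ α₀ := by
    rw [hBadd, hBsum]
  have E1 : B ((2 : ℂ) • α₀ + ∑ μ ∈ Φpos, μ) ((2 : ℂ) • α₀)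
      = 2 * (2 * B α₀ α₀ + ∑ μ ∈ Φpos, B μ α₀) := by
    rw [hBsymm _ ((2 : ℂ) • α₀), hsmul2, hBsymm α₀ _, hBadd, hsmul2, hBsum]
  have E2 : B (α₀ + atil + ∑ μ ∈ Φpos, μ) (α₀ + atil)
      = (B α₀ α₀ + ∑ μ ∈ Φpos, B μ α₀) + (B atil atil + ∑ μ ∈ Φpos, B μ atil) := by
    rw [hBsymm _ (α₀ + atil), hBadd α₀ atil, hBsymm α₀ _, hBsymm atil _, hXa, hXa,
      hortho, horth2]
    ring
  have E3 : B (atil + ∑ μ ∈ Φpos.filter (fun μ => μ Hc0 = 0), μ) atil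
      = B atil atil + ∑ μ ∈ Φpos.filter (fun μ => B μ α₀ = 0), B μ atil := by
    rw [hBadd, hBsum, hfilter0]
  -- Step 9: the numerology
  have hRval : 2 * (∑ μ ∈ Φpos, B μ α₀) = B α₀ α₀ * (2 * (v : ℚ) + 2) := by
    rw [k1, hcard]
  have hnorm' : B α₀ α₀ + (∑ μ ∈ Φpos, B μ α₀) = 1 := by rw [← E0]; exact hnormB
  have hR : (∑ μ ∈ Φpos, B μ α₀) = B α₀ α₀ * ((v : ℚ) + 1) := by
    linear_combination (1/2) * hRval
  have hav : B α₀ α₀ * ((v : ℚ) + 2) = 1 := by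
    linear_combination hnorm' - (1/2) * hRval
  have hPP0 : (∑ μ ∈ Φpos, B μ atil)
      = ∑ μ ∈ Φpos.filter (fun μ => B μ α₀ = 0), B μ atil := k3
  have hhcox' : B atil atil + ∑ μ ∈ Φpos.filter (fun μ => B μ α₀ = 0), B μ atil
      = hcox * B atil atil := by rw [← E3]; exact hhcox
  have hbP : B atil atil + (∑ μ ∈ Φpos, B μ atil) = hcox * B α₀ α₀ := by
    have h1 := hhcox'
    rw [← hPP0, k2] at h1
    rw [k2]
    exact h1
  have hCS : 2 * t' * (2 * (2 * B α₀ α₀ + ∑ μ ∈ Φpos, B μ α₀)) = 2 * (2 * t' + 2) := by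
    rw [← E1, hCartanSq, hα']; ring
  have hta : t' * B α₀ α₀ = 1 := by
    linear_combination (1/4) * hCS - (t'/2) * hRval - t' * hav
  have ht'v : t' = (v : ℚ) + 2 := by
    linear_combination ((v : ℚ) + 2) * hta - t' * hav
  have hv2 : ((v : ℚ) + 2) ≠ 0 := by positivity
  have hY2' : 2 * t' * ((B α₀ α₀ + ∑ μ ∈ Φpos, B μ α₀)
      + (B atil atil + ∑ μ ∈ Φpos, B μ atil)) = 2 * (2 * t' - β') := by
    rw [← E2]; exact hY2
  have hbeta : β' = (v : ℚ) - hcox + 2 := by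
    linear_combination (1/2) * hY2' - t' * hR - t' * hbP - t' * hav - hcox * hta + ht'v
  have hgamma : γ' = hcox + 2 := by
    rw [hα'] at ht'
    linarith [ht'v, hbeta]
  refine ⟨?_, ?_, hbeta, hgamma, ht'v, ?_⟩
  · rw [E1, eq_div_iff hv2]
    linear_combination (2 * ((v : ℚ) + 2)) * hR + (2 * ((v : ℚ) + 3)) * hav
  · rw [E2, eq_div_iff hv2]
    linear_combination ((v : ℚ) + 2) * hR + ((v : ℚ) + 2) * hbP
      + ((v : ℚ) + 2 + hcox) * hav
  · rw [hnormB]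
    exact hta


end Stmt6
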